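/- arXiv:2105.11227 — 4 statements merged into one kernel-verified Lean document; each statement's English description precedes it below -/
import Mathlib

section
/- (Finite-time stability comparison lemma) Suppose V : [0,∞) → [0,∞) is differentiable, V satisfies V'(t) ≤ −β V(t)^p + k V(t) for all t with V(t) > 0, where 0 < p < 1, k > 0, β > k·V(0)^{1-p}. Then there exists t̄ ≤ ln(1 − (k/β) V(0)^{1-p}) / (k(p−1)) such that V(t) = 0 for all t ≥ t̄. -/
/-- Once a nonneg `V` satisfying the differential inequality hits zero, it stays zero. -/
lemma finite_time_comparison.stay_zero (V : ℝ → ℝ) (hV : Differentiable ℝ V)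
    (hVnonneg : ∀ t, 0 ≤ t → 0 ≤ V t)
    (p k β : ℝ) (hk : 0 < k) (hβ0 : 0 < β)
    (hderiv : ∀ t, 0 ≤ t → 0 < V t → deriv V t ≤ -β * (V t) ^ p + k * V t)
    {t0 t1 : ℝ} (ht0 : 0 ≤ t0) (h01 : t0 ≤ t1) (hz : V t0 = 0) : V t1 = 0 := by
  set f : ℝ → ℝ := fun s => V s * Real.exp (-k * s) with hf
  have hexp : ∀ s : ℝ, HasDerivAt (fun u : ℝ => Real.exp (-k * u)) (Real.exp (-k * s) * -k) s := by
    intro s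
    have h0 : HasDerivAt (fun u : ℝ => -k * u) (-k) s := by
      simpa using (hasDerivAt_id s).const_mul (-k)
    simpa using h0.exp
  have hfd : ∀ s : ℝ, HasDerivAt f
      (deriv V s * Real.exp (-k * s) + V s * (Real.exp (-k * s) * -k)) s :=
    fun s => (hV s).hasDerivAt.mul (hexp s)
  have hanti : AntitoneOn f (Set.Icc t0 t1) := by
    apply antitoneOn_of_deriv_nonpos (convex_Icc _ _)
    · exact ((hV.continuous.mul (Real.continuous_exp.comp (continuous_const.mul
        continuous_id)))).continuousOn
    · intro x _
      exact ((hfd x).differentiableAt).differentiableWithinAt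
    · intro x hx
      rw [interior_Icc] at hx
      have hx0 : 0 < x := lt_of_le_of_lt ht0 hx.1
      rw [(hfd x).deriv]
      rcases eq_or_lt_of_le (hVnonneg x hx0.le) with h0 | hposx
      · have hmin : IsLocalMin V x := by
          filter_upwards [eventually_gt_nhds hx0] with u hu
          rw [← h0]; exact hVnonneg u hu.le
        rw [hmin.deriv_eq_zero, ← h0]; norm_num
      · have h1 := hderiv x hx0.le hposx
        have h2 : 0 ≤ β * V x ^ p :=
          mul_nonneg hβ0.le (Real.rpow_nonneg (hVnonneg x hx0.le) p)
        have hE : 0 < Real.exp (-k * x) := Real.exp_pos _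
        nlinarith
  have hle := hanti (Set.left_mem_Icc.2 h01) (Set.right_mem_Icc.2 h01) h01
  have hE1 : 0 < Real.exp (-(k * t1)) := Real.exp_pos _
  have hnn := hVnonneg t1 (ht0.trans h01)
  have hle1 : V t1 * Real.exp (-(k * t1)) ≤ 0 := by
    simpa [hf, hz] using hle
  nlinarith

/-- Finite-time stability comparison lemma: if V' ≤ -β V^p + k V while V > 0,
with 0 < p < 1, k > 0, β > k V(0)^(1-p), then V vanishes after
time at most ln(1 - (k/β) V(0)^(1-p)) / (k (p - 1)). -/
theorem finite_time_comparison (V : ℝ → ℝ) (hV : Differentiable ℝ V)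
    (hVnonneg : ∀ t, 0 ≤ t → 0 ≤ V t)
    (p k β : ℝ) (hp0 : 0 < p) (hp1 : p < 1) (hk : 0 < k)
    (hβ : k * (V 0) ^ (1 - p) < β)
    (hderiv : ∀ t, 0 ≤ t → 0 < V t → deriv V t ≤ -β * (V t) ^ p + k * V t) :
    ∃ tbar : ℝ,
      tbar ≤ Real.log (1 - (k / β) * (V 0) ^ (1 - p)) / (k * (p - 1)) ∧
      ∀ t, tbar ≤ t → V t = 0 := by
  have hV0 : 0 ≤ V 0 := hVnonneg 0 le_rfl
  set W0 := (V 0) ^ (1 - p) with hW0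
  have hW0nn : 0 ≤ W0 := Real.rpow_nonneg hV0 _
  have hβ0 : 0 < β := lt_of_le_of_lt (mul_nonneg hk.le hW0nn) hβ
  set r := (k / β) * W0 with hr
  have hr0 : 0 ≤ r := mul_nonneg (div_nonneg hk.le hβ0.le) hW0nn
  have hr1 : r < 1 := by
    rw [hr, div_mul_eq_mul_div, div_lt_one hβ0]; exact hβ
  have h1r : 0 < 1 - r := by linarith
  set T := Real.log (1 - r) / (k * (p - 1)) with hT
  have hTnn : 0 ≤ T := by
    rw [hT]
    apply div_nonneg_iff.2
    refine Or.inr ⟨Real.log_nonpos (by linarith) (by linarith), ?_⟩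
    nlinarith
  suffices hs : ∃ s, 0 ≤ s ∧ s ≤ T ∧ V s = 0 by
    obtain ⟨s, hs0, hsT, hsz⟩ := hs
    exact ⟨s, hsT, fun t ht =>
      finite_time_comparison.stay_zero V hV hVnonneg p k β hk hβ0 hderiv hs0 ht hsz⟩
  by_contra hcon
  push_neg at hcon
  have hpos : ∀ s ∈ Set.Icc (0:ℝ) T, 0 < V s := by
    intro s hs
    rcases eq_or_lt_of_le (hVnonneg s hs.1) with h | h
    · exact absurd h.symm (hcon s hs.1 hs.2)
    · exact h
  set lam := k * (1 - p) with hlam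
  have hlam0 : 0 < lam := mul_pos hk (by linarith)
  set h : ℝ → ℝ := fun t =>
    (V t) ^ (1 - p) * Real.exp (-(lam * t)) + (β / k) * (1 - Real.exp (-(lam * t))) with hh
  have hexp : ∀ s : ℝ, HasDerivAt (fun u : ℝ => Real.exp (-(lam * u)))
      (Real.exp (-(lam * s)) * -lam) s := by
    intro s
    have h0 : HasDerivAt (fun u : ℝ => -(lam * u)) (-lam) s := by
      simpa using (hasDerivAt_id s).const_mul (-lam)
    simpa using h0.exp
  have hanti : AntitoneOn h (Set.Icc 0 T) := by
    apply antitoneOn_of_deriv_nonpos (convex_Icc _ _)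
    · apply ContinuousOn.add
      · exact (hV.continuous.continuousOn.rpow_const
          (fun x hx => Or.inl (hpos x hx).ne')).mul
          (Real.continuous_exp.comp (continuous_const.mul continuous_id).neg).continuousOn
      · exact continuousOn_const.mul
          (continuousOn_const.sub
            (Real.continuous_exp.comp (continuous_const.mul continuous_id).neg).continuousOn)
    · intro x hx
      rw [interior_Icc] at hx
      have hxI : x ∈ Set.Icc (0:ℝ) T := ⟨hx.1.le, hx.2.le⟩
      have hvx : 0 < V x := hpos x hxI
      have hWd : HasDerivAt (fun u => (V u) ^ (1 - p))
          (deriv V x * (1 - p) * V x ^ (1 - p - 1)) x :=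
        (hV x).hasDerivAt.rpow_const (Or.inl hvx.ne')
      exact (((hWd.mul (hexp x)).add
        (((hasDerivAt_const x (1:ℝ)).sub (hexp x)).const_mul (β / k))).differentiableAt).differentiableWithinAt
    · intro x hx
      rw [interior_Icc] at hx
      have hxI : x ∈ Set.Icc (0:ℝ) T := ⟨hx.1.le, hx.2.le⟩
      have hvx : 0 < V x := hpos x hxI
      have hWd : HasDerivAt (fun u => (V u) ^ (1 - p))
          (deriv V x * (1 - p) * V x ^ (1 - p - 1)) x :=
        (hV x).hasDerivAt.rpow_const (Or.inl hvx.ne')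
      have hhd : HasDerivAt h
          (deriv V x * (1 - p) * V x ^ (1 - p - 1) * Real.exp (-(lam * x)) +
            V x ^ (1 - p) * (Real.exp (-(lam * x)) * -lam) +
            (β / k) * (0 - Real.exp (-(lam * x)) * -lam)) x :=
        (hWd.mul (hexp x)).add
          (((hasDerivAt_const x (1:ℝ)).sub (hexp x)).const_mul (β / k))
      rw [hhd.deriv]
      set E := Real.exp (-(lam * x)) with hE
      have hEpos : 0 < E := Real.exp_pos _
      set C := V x ^ (-p : ℝ) with hC
      set A := V x ^ p with hA
      set B := V x ^ (1 - p) with hB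
      have hCpos : 0 < C := Real.rpow_pos_of_pos hvx _
      have hCA : C * A = 1 := by
        rw [hC, hA, ← Real.rpow_add hvx]
        norm_num
      have hCv : C * V x = B := by
        have hsplit : V x ^ (1 - p : ℝ) = V x ^ (-p : ℝ) * V x := by
          rw [show (1 - p : ℝ) = -p + 1 by ring, Real.rpow_add hvx, Real.rpow_one]
        rw [hC, hB, hsplit]
      have hpow : V x ^ (1 - p - 1 : ℝ) = C := by
        rw [hC]; norm_num
      rw [hpow]
      have hd := hderiv x hx.1.le hvx
      have key : deriv V x * C ≤ -β + k * B := by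
        have := mul_le_mul_of_nonneg_right hd hCpos.le
        nlinarith
      have hβk : β / k * k = β := div_mul_cancel₀ β hk.ne'
      have hmul := mul_le_mul_of_nonneg_left key (mul_pos (show (0:ℝ) < 1 - p by linarith) hEpos).le
      have hrw : deriv V x * (1 - p) * C * E + B * (E * -lam) + β / k * (0 - E * -lam)
          = (1 - p) * E * (deriv V x * C) - (1 - p) * E * (k * B) + (1 - p) * E * β := by
        rw [hlam]
        field_simp
        ring
      rw [hrw]
      nlinarith [hmul]
  have hTmem : T ∈ Set.Icc (0:ℝ) T := Set.right_mem_Icc.2 hTnn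
  have h0mem : (0:ℝ) ∈ Set.Icc (0:ℝ) T := Set.left_mem_Icc.2 hTnn
  have hle := hanti h0mem hTmem hTnn
  have hET : Real.exp (-(lam * T)) = 1 - r := by
    rw [hT]
    have heq : -(lam * (Real.log (1 - r) / (k * (p - 1)))) = Real.log (1 - r) := by
      rw [hlam]
      have hp1' : p - 1 ≠ 0 := sub_ne_zero.2 hp1.ne
      field_simp
      ring
    rw [heq, Real.exp_log h1r]
  have hh0 : h 0 = W0 := by simp [hh, hW0]
  have hhT : h T = V T ^ (1 - p) * (1 - r) + (β / k) * r := by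
    rw [hh]; simp only [hET]; ring
  rw [hh0, hhT] at hle
  have hβkr : β / k * r = W0 := by
    rw [hr]; field_simp
  have hWT : 0 < (V T) ^ (1 - p) := Real.rpow_pos_of_pos (hpos T hTmem) _
  nlinarith [mul_pos hWT h1r]
end

section
/- (Strict diagonal dominance of the pinned coupling matrix columns) Let A be an m×m real matrix with a_{ij} ≥ 0 for i ≠ j and a_{ii} = −∑_{j≠i} a_{ij}, with rank(A) = m−1, and suppose the digraph of A has a spanning tree rooted at node 1. Let Ã = A − ε E_{11} with ε > 0 (E_{11} the matrix with 1 in entry (1,1) and 0 elsewhere). Then −Ã is a nonsingular M-matrix; in particular there exist positive constants θ_1, …, θ_m with ∑ θ_i = 1 and θ* > 0 such that ∑_{i=1}^m θ_i ã_{ij} < −θ* for every column j. -/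
set_option maxHeartbeats 1000000

open Finset Matrix

/-- `reachIn r a n b`: `b` is reachable from `a` in exactly `n` steps of `r`. -/
def reachIn {α : Type*} (r : α → α → Prop) (a : α) : ℕ → α → Prop
  | 0 => fun b => a = b
  | n+1 => fun b => ∃ c, reachIn r a n c ∧ r c b

lemma reflTransGen_reachIn {α : Type*} {r : α → α → Prop} {a b : α}
    (h : Relation.ReflTransGen r a b) : ∃ n, reachIn r a n b := by
  induction h with
  | refl => exact ⟨0, rfl⟩
  | tail _ hbc ih =>
      obtain ⟨n, hn⟩ := ih
      exact ⟨n+1, _, hn, hbc⟩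

/-- Maximum principle: if `M` has nonpositive off-diagonal entries and there is a
positive vector `x` with `M *ᵥ x` entrywise positive, then any `y` with
`M *ᵥ y ≥ 0` entrywise satisfies `y ≥ 0` entrywise. -/
lemma maxPrinciple {m : ℕ} (hm : 0 < m) (M : Matrix (Fin m) (Fin m) ℝ)
    (hMoff : ∀ i j, i ≠ j → M i j ≤ 0)
    (x : Fin m → ℝ) (hx : ∀ i, 0 < x i) (hMx : ∀ i, 0 < (M *ᵥ x) i)
    (y : Fin m → ℝ) (hy : ∀ i, 0 ≤ (M *ᵥ y) i) : ∀ i, 0 ≤ y i := by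
  by_contra h
  push_neg at h
  obtain ⟨i₁, hi₁⟩ := h
  obtain ⟨i₀, -, hmax⟩ := (univ : Finset (Fin m)).exists_max_image
    (fun i => -y i / x i) ⟨i₁, mem_univ _⟩
  set t : ℝ := -y i₀ / x i₀ with ht
  have htpos : 0 < t := by
    have h1 : 0 < -y i₁ / x i₁ := div_pos (by linarith) (hx i₁)
    exact lt_of_lt_of_le h1 (hmax i₁ (mem_univ _))
  have hty : ∀ j, 0 ≤ y j + t * x j := by
    intro j
    have := hmax j (mem_univ _)
    rw [div_le_iff₀ (hx j)] at this
    linarith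
  have hti₀ : y i₀ + t * x i₀ = 0 := by
    rw [ht, div_mul_cancel₀ _ (ne_of_gt (hx i₀))]
    ring
  have key : (M *ᵥ y) i₀ + t * (M *ᵥ x) i₀ = ∑ j, M i₀ j * (y j + t * x j) := by
    simp only [Matrix.mulVec, dotProduct, Finset.mul_sum]
    rw [← Finset.sum_add_distrib]
    congr 1; funext j; ring
  have hsum : ∑ j, M i₀ j * (y j + t * x j) ≤ 0 := by
    apply Finset.sum_nonpos
    intro j _
    by_cases hj : j = i₀
    · subst hj; rw [hti₀]; simp
    · exact mul_nonpos_of_nonpos_of_nonneg (hMoff i₀ j (Ne.symm hj)) (hty j)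
  have := hy i₀
  have := mul_pos htpos (hMx i₀)
  linarith

open Finset in
/-- Strict diagonal dominance of the pinned coupling matrix columns:
for a Laplacian-type coupling matrix A of rank m-1 whose digraph has a
spanning tree rooted at node 1 (here node 0), the pinned matrix
Ã = A − ε E₁₁ has −Ã a nonsingular M-matrix; in particular there are
positive weights θ summing to 1 and θ* > 0 with all weighted column sums
of Ã below −θ*. -/
theorem pinned_matrix_column_dominance (m : ℕ) (hm : 0 < m)
    (A : Matrix (Fin m) (Fin m) ℝ)
    (hoff : ∀ i j, i ≠ j → 0 ≤ A i j)
    (hdiag : ∀ i, A i i = -∑ j ∈ univ.erase i, A i j)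
    (hrank : A.rank = m - 1)
    (root : Fin m) (hroot : root = ⟨0, hm⟩)
    (hspan : ∀ j : Fin m, Relation.ReflTransGen (fun i j => 0 < A j i) root j)
    (ε : ℝ) (hε : 0 < ε) :
    IsUnit (A - Matrix.single root root ε).det ∧
    ∃ (θ : Fin m → ℝ) (θstar : ℝ), 0 < θstar ∧ (∀ i, 0 < θ i) ∧ (∑ i, θ i) = 1 ∧
      ∀ j, ∑ i, θ i * (A - Matrix.single root root ε) i j < -θstar := by
  classical
  obtain ⟨M, hM⟩ : ∃ M' : Matrix (Fin m) (Fin m) ℝ,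
      M' = Matrix.single root root ε - A := ⟨_, rfl⟩
  have hAMneg : ∀ i j, (A - Matrix.single root root ε) i j = -(M i j) := by
    intro i j; simp only [hM, Matrix.sub_apply]; ring
  -- off-diagonal entries of M are nonpositive
  have hMoff : ∀ i j, i ≠ j → M i j ≤ 0 := by
    intro i j hij
    have h0 : Matrix.single root root ε i j = 0 := by
      apply Matrix.single_apply_of_ne
      rintro ⟨rfl, rfl⟩; exact hij rfl
    have := hoff i j hij
    simp only [hM, Matrix.sub_apply, h0]; linarith
  -- diagonal is nonneg off-row-sums
  have hRnn : ∀ i, (0:ℝ) ≤ ∑ j ∈ univ.erase i, A i j := by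
    intro i
    exact Finset.sum_nonneg fun j hj => hoff i j (Ne.symm (Finset.ne_of_mem_erase hj))
  -- global bound R
  obtain ⟨R, hR1, hRi⟩ : ∃ R : ℝ, 1 ≤ R ∧ ∀ i, ∑ j ∈ univ.erase i, A i j ≤ R - 1 := by
    refine ⟨1 + ∑ i, ∑ j ∈ univ.erase i, A i j, ?_, ?_⟩
    · have : (0:ℝ) ≤ ∑ i, ∑ j ∈ univ.erase i, A i j :=
        Finset.sum_nonneg fun i _ => hRnn i
      linarith
    · intro i
      have := Finset.single_le_sum (f := fun i => ∑ j ∈ univ.erase i, A i j)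
        (fun i _ => hRnn i) (mem_univ i)
      linarith
  have hRpos : (0:ℝ) < R := by linarith
  -- minimum positive entry
  obtain ⟨a, hapos, hale⟩ : ∃ a : ℝ, 0 < a ∧ ∀ i j, 0 < A i j → a ≤ A i j := by
    classical
    set S : Finset ℝ := ((univ : Finset (Fin m × Fin m)).filter
        (fun p => 0 < A p.1 p.2)).image (fun p => A p.1 p.2) with hSdef
    have hmemS : ∀ i j, 0 < A i j → A i j ∈ S := by
      intro i j hij
      exact Finset.mem_image.mpr ⟨(i, j), Finset.mem_filter.mpr ⟨mem_univ _, hij⟩, rfl⟩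
    by_cases h : S.Nonempty
    · refine ⟨S.min' h, ?_, fun i j hij => S.min'_le _ (hmemS i j hij)⟩
      have hmem := S.min'_mem h
      simp only [hSdef, Finset.mem_image, Finset.mem_filter] at hmem
      obtain ⟨p, ⟨-, hp⟩, hpe⟩ := hmem
      rw [← hpe]; exact hp
    · refine ⟨1, one_pos, fun i j hij => absurd ⟨_, hmemS i j hij⟩ h⟩
  -- γ and δ
  obtain ⟨γ, hγpos, hγlt, hγkey⟩ : ∃ γ : ℝ, 0 < γ ∧ γ < 1 ∧ γ * (R + a) < a := by
    refine ⟨a / (2 * (a + R)), by positivity, ?_, ?_⟩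
    · rw [div_lt_one (by positivity)]; linarith
    · rw [div_mul_eq_mul_div, div_lt_iff₀ (by positivity)]; nlinarith
  obtain ⟨δ, hδpos, hδR⟩ : ∃ δ : ℝ, 0 < δ ∧ δ * R < ε := by
    refine ⟨ε / (2 * R), by positivity, ?_⟩
    rw [div_mul_eq_mul_div, div_lt_iff₀ (by positivity)]; nlinarith
  -- distance function
  obtain ⟨d, hdspec, hdmin⟩ : ∃ d : Fin m → ℕ,
      (∀ j, reachIn (fun i j => 0 < A j i) root (d j) j) ∧
      (∀ j n, reachIn (fun i j => 0 < A j i) root n j → d j ≤ n) :=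
    ⟨fun j => Nat.find (reflTransGen_reachIn (hspan j)),
      fun j => Nat.find_spec (reflTransGen_reachIn (hspan j)),
      fun j n h => Nat.find_min' (reflTransGen_reachIn (hspan j)) h⟩
  have hdroot : d root = 0 := Nat.le_zero.mp (hdmin root 0 rfl)
  -- the vector x
  obtain ⟨x, hxdef⟩ : ∃ x : Fin m → ℝ, x = fun i => 1 + δ * (1 - γ ^ d i) := ⟨_, rfl⟩
  have hγd1 : ∀ i, γ ^ d i ≤ 1 := fun i => pow_le_one₀ hγpos.le hγlt.le
  have hγdpos : ∀ i, 0 < γ ^ d i := fun i => pow_pos hγpos _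
  have hx1 : ∀ i, 1 ≤ x i := by
    intro i
    have := hγd1 i
    simp [hxdef]
    nlinarith
  have hxpos : ∀ i, 0 < x i := fun i => lt_of_lt_of_le one_pos (hx1 i)
  have hxroot : x root = 1 := by rw [hxdef]; simp [hdroot]
  have hxub : ∀ i, x i ≤ 1 + δ := by
    intro i
    have := hγdpos i
    simp [hxdef]
    nlinarith
  -- key sum rewriting
  have hAx : ∀ i, ∑ j, A i j * x j = ∑ j ∈ univ.erase i, A i j * (x j - x i) := by
    intro i
    rw [← Finset.sum_erase_add _ _ (mem_univ i), hdiag i]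
    have h2 : ∑ j ∈ univ.erase i, A i j * (x j - x i)
        = ∑ j ∈ univ.erase i, A i j * x j - (∑ j ∈ univ.erase i, A i j) * x i := by
      rw [Finset.sum_mul, ← Finset.sum_sub_distrib]
      congr 1; funext j; ring
    rw [h2]; ring
  -- M *ᵥ x is positive
  have hMx : ∀ i, 0 < (M *ᵥ x) i := by
    intro i
    have hMxi : (M *ᵥ x) i
        = (if i = root then ε * x root else 0) - ∑ j, A i j * x j := by
      rw [hM]
      simp only [Matrix.sub_mulVec, Pi.sub_apply]
      congr 1
      · simp only [Matrix.mulVec, dotProduct]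
        have hsum : ∑ b, Matrix.single root root ε i b * x b
            = Matrix.single root root ε i root * x root :=
          Finset.sum_eq_single root
            (fun b _ hb => by
              rw [Matrix.single_apply_of_ne, zero_mul]
              rintro ⟨-, rfl⟩; exact hb rfl)
            (fun hh => absurd (mem_univ root) hh)
        rw [hsum]
        by_cases hi : i = root
        · rw [if_pos hi, hi, Matrix.single_apply_same]
        · rw [if_neg hi, Matrix.single_apply_of_ne, zero_mul]
          rintro ⟨rfl, -⟩; exact hi rfl
    rw [hMxi, hAx i]
    by_cases hi : i = root
    · rw [hi, if_pos rfl, hxroot, mul_one]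
      have hb : ∑ j ∈ univ.erase root, A root j * (x j - 1) ≤ δ * R := by
        calc ∑ j ∈ univ.erase root, A root j * (x j - 1)
            ≤ ∑ j ∈ univ.erase root, A root j * δ := by
              apply Finset.sum_le_sum
              intro j hj
              apply mul_le_mul_of_nonneg_left _ (hoff root j (Ne.symm (Finset.ne_of_mem_erase hj)))
              have := hxub j
              linarith
          _ = (∑ j ∈ univ.erase root, A root j) * δ := by rw [Finset.sum_mul]
          _ ≤ (R - 1) * δ := mul_le_mul_of_nonneg_right (hRi root) hδpos.le
          _ ≤ δ * R := by nlinarith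
      linarith
    · -- i ≠ root : get predecessor j* on shortest path
      have hd0 : d i ≠ 0 := by
        intro h0
        have := hdspec i
        rw [h0] at this
        exact hi this.symm
      obtain ⟨k, hk⟩ : ∃ k, d i = k + 1 := ⟨d i - 1, (Nat.succ_pred_eq_of_pos (Nat.pos_of_ne_zero hd0)).symm⟩
      have hspec := hdspec i
      rw [hk] at hspec
      obtain ⟨c, hc, hAc⟩ := hspec
      have hdc : d c ≤ k := hdmin c k hc
      have hci : c ≠ i := by
        intro h
        subst h
        have h1 : A c c ≤ 0 := by rw [hdiag c]; linarith [hRnn c]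
        linarith
    -- bound the sum
      rw [if_neg hi]
      have hcmem : c ∈ univ.erase i := Finset.mem_erase.mpr ⟨hci, mem_univ _⟩
      rw [← Finset.add_sum_erase _ _ hcmem]
      -- term at c
      have hxc : x i - x c = δ * (γ ^ d c - γ ^ d i) := by simp [hxdef]; ring
      have hγc : γ ^ k ≤ γ ^ d c := pow_le_pow_of_le_one hγpos.le hγlt.le hdc
      have hterm : A i c * (x c - x i) ≤ a * (δ * (γ ^ d i - γ ^ k)) := by
        have hfac : x c - x i ≤ δ * (γ ^ d i - γ ^ k) := by
          have : x c - x i = δ * (γ ^ d i - γ ^ d c) := by simp [hxdef]; ring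
          rw [this]
          apply mul_le_mul_of_nonneg_left _ hδpos.le
          linarith
        have hneg : δ * (γ ^ d i - γ ^ k) ≤ 0 := by
          have : γ ^ d i ≤ γ ^ k := by
            rw [hk]
            calc γ ^ (k+1) = γ ^ k * γ := by ring
              _ ≤ γ ^ k * 1 := by nlinarith [pow_pos hγpos k]
              _ = γ ^ k := by ring
          nlinarith
        calc A i c * (x c - x i) ≤ A i c * (δ * (γ ^ d i - γ ^ k)) :=
              mul_le_mul_of_nonneg_left hfac (le_of_lt (lt_of_lt_of_le hapos (hale i c hAc)))
          _ ≤ a * (δ * (γ ^ d i - γ ^ k)) :=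
              mul_le_mul_of_nonpos_right (hale i c hAc) hneg
      -- other terms
      have hrest : ∑ j ∈ (univ.erase i).erase c, A i j * (x j - x i)
          ≤ (R - 1) * (δ * γ ^ d i) := by
        calc ∑ j ∈ (univ.erase i).erase c, A i j * (x j - x i)
            ≤ ∑ j ∈ (univ.erase i).erase c, A i j * (δ * γ ^ d i) := by
              apply Finset.sum_le_sum
              intro j hj
              have hji : j ≠ i := Finset.ne_of_mem_erase (Finset.mem_of_mem_erase hj)
              apply mul_le_mul_of_nonneg_left _ (hoff i j (Ne.symm hji))
              have h1 : x j - x i = δ * (γ ^ d i - γ ^ d j) := by simp [hxdef]; ring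
              rw [h1]
              have := hγdpos j
              nlinarith
          _ = (∑ j ∈ (univ.erase i).erase c, A i j) * (δ * γ ^ d i) := by rw [Finset.sum_mul]
          _ ≤ (R - 1) * (δ * γ ^ d i) := by
              apply mul_le_mul_of_nonneg_right _ (by positivity)
              calc ∑ j ∈ (univ.erase i).erase c, A i j
                  ≤ ∑ j ∈ univ.erase i, A i j := by
                    apply Finset.sum_le_sum_of_subset_of_nonneg (Finset.erase_subset _ _)
                    intro j hj _
                    exact hoff i j (Ne.symm (Finset.ne_of_mem_erase hj))
                _ ≤ R - 1 := hRi i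
      -- combine: total < 0
      have htotal : A i c * (x c - x i) + ∑ j ∈ (univ.erase i).erase c, A i j * (x j - x i)
          < 0 := by
        have h1 : a * (δ * (γ ^ d i - γ ^ k)) + (R - 1) * (δ * γ ^ d i)
            ≤ δ * γ ^ k * (γ * (R + a) - a) := by
          rw [hk]
          have hgk : (0:ℝ) < γ ^ k := pow_pos hγpos k
          have : γ ^ (k+1) = γ ^ k * γ := by ring
          rw [this]
          nlinarith [mul_pos (mul_pos hδpos hgk) hγpos]
        have h2 : δ * γ ^ k * (γ * (R + a) - a) < 0 := by
          have hgk : (0:ℝ) < γ ^ k := pow_pos hγpos k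
          have : γ * (R + a) - a < 0 := by linarith
          exact mul_neg_of_pos_of_neg (mul_pos hδpos hgk) this
        linarith
      linarith
  -- determinant nonzero
  have hdet : M.det ≠ 0 := by
    intro h
    obtain ⟨v, hv0, hv⟩ := Matrix.exists_mulVec_eq_zero_iff.mpr h
    have h1 := maxPrinciple hm M hMoff x hxpos hMx v (by rw [hv]; intro i; simp)
    have h2 := maxPrinciple hm M hMoff x hxpos hMx (-v)
      (by rw [Matrix.mulVec_neg, hv]; intro i; simp)
    apply hv0
    funext i
    have ha := h1 i
    have hb := h2 i
    simp only [Pi.neg_apply] at hb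
    simp only [Pi.zero_apply]
    linarith
  have hUnit : IsUnit M.det := isUnit_iff_ne_zero.mpr hdet
  obtain ⟨N, hN⟩ : ∃ N' : Matrix (Fin m) (Fin m) ℝ, N' = M⁻¹ := ⟨_, rfl⟩
  have hMN : M * N = 1 := by rw [hN]; exact Matrix.mul_nonsing_inv M hUnit
  have hNM : N * M = 1 := by rw [hN]; exact Matrix.nonsing_inv_mul M hUnit
  -- N is entrywise nonnegative
  have hNnn : ∀ k j, 0 ≤ N k j := by
    intro k j
    have hcol : M *ᵥ (fun l => N l j) = fun i => (M * N) i j := by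
      funext i
      simp [Matrix.mulVec, dotProduct, Matrix.mul_apply]
    have := maxPrinciple hm M hMoff x hxpos hMx (fun l => N l j)
      (by
        rw [hcol, hMN]
        intro i
        by_cases hij : i = j <;> simp [Matrix.one_apply, hij])
    exact this k
  -- θ'
  set θ' : Fin m → ℝ := fun i => ∑ k, N k i with hθ'
  have hθ'col : ∀ j, ∑ i, θ' i * M i j = 1 := by
    intro j
    have : ∑ i, θ' i * M i j = ∑ k, ∑ i, N k i * M i j := by
      rw [Finset.sum_comm]
      congr 1; funext i
      rw [hθ', Finset.sum_mul]
    rw [this]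
    have : ∀ k, ∑ i, N k i * M i j = (N * M) k j := by
      intro k; rw [Matrix.mul_apply]
    simp_rw [this, hNM]
    simp [Matrix.one_apply]
  have hθ'nn : ∀ i, 0 ≤ θ' i := fun i => Finset.sum_nonneg fun k _ => hNnn k i
  have hθ'pos : ∀ i, 0 < θ' i := by
    intro i
    rcases lt_or_eq_of_le (hθ'nn i) with h | h
    · exact h
    · exfalso
      have hzero : ∀ k, N k i = 0 := by
        have := (Finset.sum_eq_zero_iff_of_nonneg (fun k _ => hNnn k i)).mp h.symm
        intro k; exact this k (mem_univ k)
      have h1 : (M * N) i i = 1 := by rw [hMN]; simp [Matrix.one_apply]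
      rw [Matrix.mul_apply] at h1
      simp [hzero] at h1
  set s : ℝ := ∑ i, θ' i with hs
  have hspos : 0 < s := Finset.sum_pos (fun i _ => hθ'pos i) ⟨⟨0, hm⟩, mem_univ _⟩
  constructor
  · -- det part
    have hdetA : (A - Matrix.single root root ε) = -M := by
      simp [hM]
    rw [hdetA, Matrix.det_neg]
    apply isUnit_iff_ne_zero.mpr
    intro h
    rcases mul_eq_zero.mp h with h | h
    · exact pow_ne_zero _ (by norm_num : (-1:ℝ) ≠ 0) h
    · exact hdet h
  · refine ⟨fun i => θ' i / s, 1 / (2 * s), by positivity,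
      fun i => div_pos (hθ'pos i) hspos, ?_, ?_⟩
    · rw [← Finset.sum_div, ← hs, div_self (ne_of_gt hspos)]
    · intro j
      have hcol : ∑ i, θ' i / s * (A - Matrix.single root root ε) i j = -(1/s) := by
        have : ∑ i, θ' i / s * (A - Matrix.single root root ε) i j
            = (∑ i, θ' i * (-(M i j))) / s := by
          rw [Finset.sum_div]
          congr 1; funext i
          rw [hAMneg i j]; ring
        rw [this]
        have : ∑ i, θ' i * (-(M i j)) = -(∑ i, θ' i * M i j) := by
          rw [← Finset.sum_neg_distrib]
          congr 1; funext i; ring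
        rw [this, hθ'col j]
        ring
      rw [hcol]
      have hlt : 1 / (2 * s) < 1 / s := by
        rw [div_lt_div_iff₀ (by positivity) (by positivity)]
        nlinarith
      linarith
end

section
/- (Key dissipation estimate for the continuous algorithm) Under the same hypotheses on Ã, θ, θ* as before (∑_i θ_i ã_{ij} < −θ* for all j, ã_{ij} ≥ 0 for i≠j), for any nonzero vectors v_1,…,v_m ∈ ℝ^n and 0 < α < 1, ∑_{i=1}^m θ_i ∑_{k=1}^n sign(v_i^k) · ∑_{j=1}^m ã_{ij} v_j^k / ‖v_j‖_1^α ≤ ∑_{j=1}^m (∑_{i=1}^m θ_i ã_{ij}) ‖v_j‖_1^{1-α} ≤ −θ* ∑_{j=1}^m ‖v_j‖_1^{1-α}. -/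
lemma sign_mul_self' (x : ℝ) : Real.sign x * x = |x| := by
  rcases lt_trichotomy x 0 with h | h | h
  · rw [Real.sign_of_neg h, abs_of_neg h]; ring
  · simp [h]
  · rw [Real.sign_of_pos h, abs_of_pos h]; ring

open Finset in
/-- Key dissipation estimate for the continuous algorithm. -/
theorem dissipation_continuous (m n : ℕ)
    (Atil : Matrix (Fin m) (Fin m) ℝ)
    (hoff : ∀ i j, i ≠ j → 0 ≤ Atil i j)
    (θ : Fin m → ℝ) (hθ : ∀ i, 0 < θ i)
    (θstar : ℝ) (hθstar : 0 < θstar)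
    (hcol : ∀ j, ∑ i, θ i * Atil i j < -θstar)
    (α : ℝ) (hα0 : 0 < α) (hα1 : α < 1)
    (v : Fin m → Fin n → ℝ) (hv : ∀ j, v j ≠ 0) :
    (∑ i, θ i * ∑ k, Real.sign (v i k) *
        ∑ j, Atil i j * v j k / (∑ l, |v j l|) ^ α) ≤
      ∑ j, (∑ i, θ i * Atil i j) * (∑ l, |v j l|) ^ (1 - α) ∧
    (∑ j, (∑ i, θ i * Atil i j) * (∑ l, |v j l|) ^ (1 - α)) ≤
      -θstar * ∑ j, (∑ l, |v j l|) ^ (1 - α) := by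
  set S : Fin m → ℝ := fun j => ∑ l, |v j l| with hSdef
  have hS : ∀ j, 0 < S j := by
    intro j
    have h : ∃ l, v j l ≠ 0 := by
      by_contra h
      push_neg at h
      exact hv j (funext h)
    obtain ⟨l, hl⟩ := h
    exact Finset.sum_pos' (fun _ _ => abs_nonneg _)
      ⟨l, Finset.mem_univ l, abs_pos.mpr hl⟩
  have hSα : ∀ j, 0 < S j ^ α := fun j => Real.rpow_pos_of_pos (hS j) α
  -- key pointwise bound
  have hT : ∀ i j, θ i * (Atil i j * (∑ k, Real.sign (v i k) * v j k) / S j ^ α)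
      ≤ θ i * Atil i j * S j ^ (1 - α) := by
    intro i j
    have hpow : S j / S j ^ α = S j ^ (1 - α) := by
      rw [Real.rpow_sub (hS j), Real.rpow_one]
    by_cases hij : i = j
    · subst hij
      have : ∑ k, Real.sign (v i k) * v i k = S i := by
        simp [hSdef, sign_mul_self']
      rw [this, mul_div_assoc, hpow, mul_assoc]
    · have hbd : ∑ k, Real.sign (v i k) * v j k ≤ S j := by
        apply Finset.sum_le_sum
        intro k _
        calc Real.sign (v i k) * v j k ≤ |Real.sign (v i k) * v j k| := le_abs_self _
          _ = |Real.sign (v i k)| * |v j k| := abs_mul _ _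
          _ ≤ 1 * |v j k| := by
              apply mul_le_mul_of_nonneg_right _ (abs_nonneg _)
              rcases lt_trichotomy (v i k) 0 with h | h | h
              · simp [Real.sign_of_neg h]
              · simp [h]
              · simp [Real.sign_of_pos h]
          _ = |v j k| := one_mul _
      have h1 : Atil i j * (∑ k, Real.sign (v i k) * v j k) / S j ^ α
          ≤ Atil i j * S j / S j ^ α := by
        gcongr
        exact hoff i j hij
      calc θ i * (Atil i j * (∑ k, Real.sign (v i k) * v j k) / S j ^ α)
          ≤ θ i * (Atil i j * S j / S j ^ α) :=
            mul_le_mul_of_nonneg_left h1 (hθ i).le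
        _ = θ i * Atil i j * S j ^ (1 - α) := by
            rw [mul_div_assoc, hpow]; ring
  constructor
  · have hLHS : (∑ i, θ i * ∑ k, Real.sign (v i k) *
        ∑ j, Atil i j * v j k / S j ^ α)
        = ∑ i, ∑ j, θ i * (Atil i j * (∑ k, Real.sign (v i k) * v j k) / S j ^ α) := by
      apply Finset.sum_congr rfl
      intro i _
      rw [Finset.mul_sum]
      rw [show (∑ k, θ i * (Real.sign (v i k) * ∑ j, Atil i j * v j k / S j ^ α))
          = ∑ k, ∑ j, θ i * (Real.sign (v i k) * (Atil i j * v j k / S j ^ α)) by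
        apply Finset.sum_congr rfl; intro k _; rw [Finset.mul_sum, Finset.mul_sum]]
      rw [Finset.sum_comm]
      apply Finset.sum_congr rfl
      intro j _
      rw [Finset.mul_sum, Finset.sum_div, Finset.mul_sum]
      apply Finset.sum_congr rfl
      intro k _
      field_simp
    rw [hLHS]
    rw [show (∑ j, (∑ i, θ i * Atil i j) * S j ^ (1 - α))
        = ∑ i, ∑ j, θ i * Atil i j * S j ^ (1 - α) by
      rw [Finset.sum_comm]
      exact Finset.sum_congr rfl fun j _ => by rw [Finset.sum_mul]]
    exact Finset.sum_le_sum fun i _ => Finset.sum_le_sum fun j _ => hT i j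
  · rw [Finset.mul_sum]
    apply Finset.sum_le_sum
    intro j _
    exact mul_le_mul_of_nonneg_right (hcol j).le (Real.rpow_nonneg (hS j).le _)
end

section
/- (Column-sum bound via left eigen-weights gives norm decay for the pinned Laplacian with perturbation) Suppose θ_i > 0, θ* > 0 and ∑_i θ_i ã_{ij} < −θ* for all j, with ã_{ij} ≥ 0 for i ≠ j. Let V(v) = ∑_i θ_i ‖v_i‖_1 for v = (v_1,…,v_m) ∈ (ℝ^n)^m. Then for any nonzero v_1,…,v_m, any g_1,…,g_m ∈ ℝ^n with ∑_i θ_i ‖g_i‖_1 ≤ L̃ V(v), and any perturbations u_1,…,u_m with ‖u_i‖_1 ≤ c̃, the upper Dini derivative estimate holds: ∑_i θ_i ∑_k sign(v_i^k)[g_i^k + c ∑_j ã_{ij} v_j^k/‖v_j‖_1 + u_i^k] ≤ L̃ V(v) − c m θ* + c̃ m·max_i θ_i ≤ L̃ V(v) − c m θ* + c̃ m. -/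
open Finset in
/-- Column-sum bound via left eigen-weights gives norm decay for the pinned
Laplacian with perturbation (combined estimate for heterogeneous networks). -/
theorem pinned_laplacian_perturbed_decay (m n : ℕ) (hm : 0 < m)
    (Atil : Matrix (Fin m) (Fin m) ℝ)
    (hoff : ∀ i j, i ≠ j → 0 ≤ Atil i j)
    (θ : Fin m → ℝ) (hθ : ∀ i, 0 < θ i) (hθsum : (∑ i, θ i) = 1)
    (θstar : ℝ) (hθstar : 0 < θstar)
    (hcol : ∀ j, ∑ i, θ i * Atil i j < -θstar)
    (v g u : Fin m → Fin n → ℝ) (hv : ∀ i, v i ≠ 0)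
    (Ltil c ctil : ℝ) (hL : 0 < Ltil) (hc : 0 < c) (hctil : 0 ≤ ctil)
    (hg : ∑ i, θ i * ∑ k, |g i k| ≤ Ltil * ∑ i, θ i * ∑ k, |v i k|)
    (hu : ∀ i, ∑ k, |u i k| ≤ ctil) :
    (∑ i, θ i * ∑ k, Real.sign (v i k) *
        (g i k + c * ∑ j, Atil i j * v j k / (∑ l, |v j l|) + u i k)) ≤
      Ltil * (∑ i, θ i * ∑ k, |v i k|) - c * m * θstar +
        ctil * m * (univ.sup' (univ_nonempty_iff.mpr (Fin.pos_iff_nonempty.mp hm)) θ) ∧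
    Ltil * (∑ i, θ i * ∑ k, |v i k|) - c * m * θstar +
        ctil * m * (univ.sup' (univ_nonempty_iff.mpr (Fin.pos_iff_nonempty.mp hm)) θ) ≤
      Ltil * (∑ i, θ i * ∑ k, |v i k|) - c * m * θstar + ctil * m := by
  have hnem : (univ : Finset (Fin m)).Nonempty :=
    univ_nonempty_iff.mpr (Fin.pos_iff_nonempty.mp hm)
  set σ : ℝ := univ.sup' hnem θ with hσ
  set S : Fin m → ℝ := fun j => ∑ l, |v j l| with hSdef
  have hS : ∀ j, 0 < S j := by
    intro j
    obtain ⟨l, hl⟩ := Function.ne_iff.mp (hv j)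
    exact lt_of_lt_of_le (abs_pos.mpr hl)
      (Finset.single_le_sum (f := fun k => |v j k|) (fun k _ => abs_nonneg _) (mem_univ l))
  have hsignabs : ∀ x : ℝ, |Real.sign x| ≤ 1 := by
    intro x
    rcases lt_trichotomy x 0 with h|h|h
    · simp [Real.sign_of_neg h]
    · simp [h]
    · simp [Real.sign_of_pos h]
  have hsign : ∀ x y : ℝ, Real.sign x * y ≤ |y| := by
    intro x y
    calc Real.sign x * y ≤ |Real.sign x * y| := le_abs_self _
    _ = |Real.sign x| * |y| := abs_mul _ _
    _ ≤ 1 * |y| := mul_le_mul_of_nonneg_right (hsignabs x) (abs_nonneg _)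
    _ = |y| := one_mul _
  have hsignself : ∀ x : ℝ, Real.sign x * x = |x| := by
    intro x
    rcases lt_trichotomy x 0 with h|h|h
    · rw [Real.sign_of_neg h, abs_of_neg h]; ring
    · simp [h]
    · rw [Real.sign_of_pos h, abs_of_pos h]; ring
  have key : ∀ i, ∑ k, Real.sign (v i k) *
      (g i k + c * ∑ j, Atil i j * v j k / S j + u i k)
      ≤ (∑ k, |g i k|) + c * (∑ j, Atil i j) + (∑ k, |u i k|) := by
    intro i
    have h1 : ∀ k, Real.sign (v i k) *
        (g i k + c * ∑ j, Atil i j * v j k / S j + u i k)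
        = Real.sign (v i k) * g i k
          + (∑ j, c * ((Atil i j / S j) * (Real.sign (v i k) * v j k)))
          + Real.sign (v i k) * u i k := by
      intro k
      rw [mul_add, mul_add, Finset.mul_sum, Finset.mul_sum]
      rw [show (∑ j, Real.sign (v i k) * (c * (Atil i j * v j k / S j)))
          = ∑ j, c * ((Atil i j / S j) * (Real.sign (v i k) * v j k)) from
        Finset.sum_congr rfl fun j _ => by ring]
    have expand : ∑ k, Real.sign (v i k) *
        (g i k + c * ∑ j, Atil i j * v j k / S j + u i k)
        = (∑ k, Real.sign (v i k) * g i k)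
          + c * (∑ j, (Atil i j / S j) * ∑ k, Real.sign (v i k) * v j k)
          + (∑ k, Real.sign (v i k) * u i k) := by
      rw [Finset.sum_congr rfl fun k _ => h1 k]
      rw [Finset.sum_add_distrib, Finset.sum_add_distrib]
      rw [show (∑ k, ∑ j, c * ((Atil i j / S j) * (Real.sign (v i k) * v j k)))
          = c * (∑ j, (Atil i j / S j) * ∑ k, Real.sign (v i k) * v j k) from by
        rw [Finset.sum_comm, Finset.mul_sum]
        exact Finset.sum_congr rfl fun j _ => by
          simp only [Finset.mul_sum]]
    rw [expand]
    refine add_le_add (add_le_add ?_ ?_) ?_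
    · exact Finset.sum_le_sum fun k _ => hsign _ _
    · refine mul_le_mul_of_nonneg_left (Finset.sum_le_sum fun j _ => ?_) hc.le
      by_cases hij : j = i
      · subst hij
        have hx : (∑ k, Real.sign (v j k) * v j k) = S j :=
          Finset.sum_congr rfl fun k _ => hsignself _
        rw [hx, div_mul_cancel₀ _ (hS j).ne']
      · have h1 : (∑ k, Real.sign (v i k) * v j k) ≤ S j :=
          Finset.sum_le_sum fun k _ => hsign _ _
        have h2 : 0 ≤ Atil i j / S j :=
          div_nonneg (hoff i j (Ne.symm hij)) (hS j).le
        calc (Atil i j / S j) * ∑ k, Real.sign (v i k) * v j k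
            ≤ (Atil i j / S j) * S j := mul_le_mul_of_nonneg_left h1 h2
          _ = Atil i j := div_mul_cancel₀ _ (hS j).ne'
    · exact Finset.sum_le_sum fun k _ => hsign _ _
  have hσ1 : σ ≤ 1 := by
    refine Finset.sup'_le hnem θ fun i _ => ?_
    calc θ i ≤ ∑ j, θ j :=
        Finset.single_le_sum (fun j _ => (hθ j).le) (mem_univ i)
      _ = 1 := hθsum
  have hσm : 1 ≤ (m : ℝ) * σ := by
    calc (1 : ℝ) = ∑ i, θ i := hθsum.symm
      _ ≤ ∑ _i : Fin m, σ :=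
        Finset.sum_le_sum fun i _ => Finset.le_sup' θ (mem_univ i)
      _ = (m : ℝ) * σ := by simp [mul_comm]
  constructor
  · have step1 : (∑ i, θ i * ∑ k, Real.sign (v i k) *
        (g i k + c * ∑ j, Atil i j * v j k / S j + u i k))
        ≤ ∑ i, θ i * ((∑ k, |g i k|) + c * (∑ j, Atil i j) + (∑ k, |u i k|)) :=
      Finset.sum_le_sum fun i _ => mul_le_mul_of_nonneg_left (key i) (hθ i).le
    have hmid : (∑ i, θ i * (c * ∑ j, Atil i j)) = c * ∑ j, ∑ i, θ i * Atil i j := by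
      have h5 : ∀ i, θ i * (c * ∑ j, Atil i j) = ∑ j, c * (θ i * Atil i j) := by
        intro i
        rw [Finset.mul_sum, Finset.mul_sum]
        exact Finset.sum_congr rfl fun j _ => by ring
      rw [Finset.sum_congr rfl fun i _ => h5 i, Finset.sum_comm]
      simp only [Finset.mul_sum]
    have step2 : ∑ i, θ i * ((∑ k, |g i k|) + c * (∑ j, Atil i j) + (∑ k, |u i k|))
        = (∑ i, θ i * ∑ k, |g i k|) + c * (∑ j, ∑ i, θ i * Atil i j)
          + (∑ i, θ i * ∑ k, |u i k|) := by
      simp only [mul_add, Finset.sum_add_distrib, hmid]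
    have hB : c * (∑ j, ∑ i, θ i * Atil i j) ≤ -(c * m * θstar) := by
      have h3 : (∑ j, ∑ i, θ i * Atil i j) ≤ ∑ _j : Fin m, (-θstar) :=
        Finset.sum_le_sum fun j _ => (hcol j).le
      calc c * (∑ j, ∑ i, θ i * Atil i j) ≤ c * ∑ _j : Fin m, (-θstar) :=
          mul_le_mul_of_nonneg_left h3 hc.le
        _ = -(c * m * θstar) := by simp; ring
    have hC : (∑ i, θ i * ∑ k, |u i k|) ≤ ctil * m * σ := by
      calc (∑ i, θ i * ∑ k, |u i k|) ≤ ∑ i, θ i * ctil :=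
          Finset.sum_le_sum fun i _ => mul_le_mul_of_nonneg_left (hu i) (hθ i).le
        _ = ctil := by rw [← Finset.sum_mul, hθsum, one_mul]
        _ = ctil * 1 := (mul_one _).symm
        _ ≤ ctil * ((m : ℝ) * σ) := mul_le_mul_of_nonneg_left hσm hctil
        _ = ctil * m * σ := by ring
    calc (∑ i, θ i * ∑ k, Real.sign (v i k) *
          (g i k + c * ∑ j, Atil i j * v j k / S j + u i k))
        ≤ (∑ i, θ i * ∑ k, |g i k|) + c * (∑ j, ∑ i, θ i * Atil i j)
          + (∑ i, θ i * ∑ k, |u i k|) := step2 ▸ step1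
      _ ≤ Ltil * (∑ i, θ i * ∑ k, |v i k|) + -(c * m * θstar) + ctil * m * σ :=
          add_le_add (add_le_add hg hB) hC
      _ = Ltil * (∑ i, θ i * ∑ k, |v i k|) - c * m * θstar + ctil * m * σ := by ring
  · have h4 : ctil * m * σ ≤ ctil * m * 1 :=
      mul_le_mul_of_nonneg_left hσ1 (by positivity)
    simpa using add_le_add_left h4 (Ltil * (∑ i, θ i * ∑ k, |v i k|) - c * m * θstar)
end
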